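/- Let T be a positive-rate stochastic transition matrix on E_κ (T(a,b,c) > 0 and ∑_c T(a,b,c) = 1 for all a,b) satisfying T(a,b,c) = T(0,0,0)·T(a,b,0)·T(a,0,c)·T(0,b,c)/(T(a,0,0)·T(0,b,0)·T(0,0,c)) for all a,b,c. Let η be a probability vector with all entries positive, and define D_{a,c} = (∑_ℓ (η_ℓ/T(a,ℓ,0))·T(a,ℓ,c)) / (∑_{b'} η_{b'}/T(a,b',0)) and U_{c,b} = ((η_b/T(0,b,0))·T(0,b,c)) / (∑_{b'} (η_{b'}/T(0,b',0))·T(0,b',c)). Then D and U are row-stochastic and for all a,b,c: D_{a,c}·U_{c,b} / (DU)_{a,b} = T(a,b,c). -/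

import Mathlib

theorem stmt_4 (κ : ℕ) (T : Fin (κ+1) → Fin (κ+1) → Fin (κ+1) → ℝ)
    (hpos : ∀ a b c, 0 < T a b c)
    (hstoch : ∀ a b, ∑ c, T a b c = 1)
    (hcond : ∀ a b c, T a b c =
      T 0 0 0 * T a b 0 * T a 0 c * T 0 b c / (T a 0 0 * T 0 b 0 * T 0 0 c))
    (η : Fin (κ+1) → ℝ) (hη : ∀ a, 0 < η a) (hη1 : ∑ a, η a = 1)
    (D U : Matrix (Fin (κ+1)) (Fin (κ+1)) ℝ)
    (hD : ∀ a c, D a c = (∑ ℓ, (η ℓ / T a ℓ 0) * T a ℓ c) / (∑ b', η b' / T a b' 0))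
    (hU : ∀ c b, U c b = ((η b / T 0 b 0) * T 0 b c) / (∑ b', (η b' / T 0 b' 0) * T 0 b' c)) :
    (∀ a c, 0 ≤ D a c) ∧ (∀ a, ∑ c, D a c = 1) ∧
    (∀ a c, 0 ≤ U a c) ∧ (∀ a, ∑ c, U a c = 1) ∧
    (∀ a b c, D a c * U c b / (D * U) a b = T a b c) := by
  have hne : ∀ a b c, T a b c ≠ 0 := fun a b c => (hpos a b c).ne'
  have hdD : ∀ a, 0 < ∑ b', η b' / T a b' 0 :=
    fun a => Finset.sum_pos (fun b' _ => div_pos (hη b') (hpos a b' 0)) Finset.univ_nonempty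
  have hS : ∀ c, 0 < ∑ b', (η b' / T 0 b' 0) * T 0 b' c :=
    fun c => Finset.sum_pos
      (fun b' _ => mul_pos (div_pos (hη b') (hpos 0 b' 0)) (hpos 0 b' c)) Finset.univ_nonempty
  have hDnum : ∀ a c, (∑ ℓ, (η ℓ / T a ℓ 0) * T a ℓ c)
      = (T a 0 c * T 0 0 0 / (T a 0 0 * T 0 0 c)) * ∑ b', (η b' / T 0 b' 0) * T 0 b' c := by
    intro a c
    rw [Finset.mul_sum]
    refine Finset.sum_congr rfl fun ℓ _ => ?_
    rw [hcond a ℓ c]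
    field_simp [hne a ℓ 0, hne 0 ℓ 0, hne a 0 0, hne 0 0 c]
  have hkey : ∀ a b c, D a c * U c b
      = η b / ((∑ b', η b' / T a b' 0) * T a b 0) * T a b c := by
    intro a b c
    rw [hD, hU, hDnum, hcond a b c]
    have hS' : (0:ℝ) < ∑ x, η x * T 0 x c / T 0 x 0 :=
      Finset.sum_pos (fun x _ => div_pos (mul_pos (hη x) (hpos 0 x c)) (hpos 0 x 0))
        Finset.univ_nonempty
    field_simp [hne a b 0, hne 0 b 0, hne a 0 0, hne 0 0 c, (hS c).ne', (hdD a).ne']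
  refine ⟨?_, ?_, ?_, ?_, ?_⟩
  · intro a c
    rw [hD]
    exact div_nonneg (Finset.sum_nonneg fun ℓ _ =>
      mul_nonneg (div_nonneg (hη ℓ).le (hpos a ℓ 0).le) (hpos a ℓ c).le) (hdD a).le
  · intro a
    simp only [hD]
    rw [← Finset.sum_div, Finset.sum_comm]
    simp_rw [← Finset.mul_sum, hstoch, mul_one]
    exact div_self (hdD a).ne'
  · intro c b
    rw [hU]
    exact div_nonneg (mul_nonneg (div_nonneg (hη b).le (hpos 0 b 0).le) (hpos 0 b c).le) (hS c).le
  · intro c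
    simp only [hU]
    rw [← Finset.sum_div]
    exact div_self (hS c).ne'
  · intro a b c
    have hmul : (D * U) a b = η b / ((∑ b', η b' / T a b' 0) * T a b 0) := by
      rw [Matrix.mul_apply]
      simp_rw [hkey]
      rw [← Finset.mul_sum, hstoch, mul_one]
    have hCne : η b / ((∑ b', η b' / T a b' 0) * T a b 0) ≠ 0 :=
      div_ne_zero (hη b).ne' (mul_pos (hdD a) (hpos a b 0)).ne'
    rw [hkey, hmul, mul_comm, mul_div_assoc, div_self hCne, mul_one]
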